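/- Let y > 0 be a real number and k an integer. Then the series ∑_{n=0}^∞ (y+n)^{n-k} x^n / n! converges (is summable) for every real x with |x| < 1/e, and fails to be summable for every real x with |x| > 1/e; that is, the power series T_k(x,y) = ∑_{n=0}^∞ (y+n)^{n-k} x^n/n! has radius of convergence exactly 1/e. -/

import Mathlib

open Filter Real Topology

/-- The power series `T_k(x,y) = ∑ (y+n)^{n-k} x^n/n!` (with `y > 0`, `k : ℤ`)
is summable for `|x| < 1/e` and not summable for `|x| > 1/e`: its radius of
convergence is exactly `1/e`. -/
theorem kolberg_series_radius (y : ℝ) (hy : 0 < y) (k : ℤ) :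
    (∀ x : ℝ, |x| < 1 / Real.exp 1 →
        Summable (fun n : ℕ =>
          (y + n) ^ ((n : ℤ) - k) * x ^ n / (Nat.factorial n : ℝ)))
    ∧ (∀ x : ℝ, 1 / Real.exp 1 < |x| →
        ¬ Summable (fun n : ℕ =>
          (y + n) ^ ((n : ℤ) - k) * x ^ n / (Nat.factorial n : ℝ))) := by
  have he : (0:ℝ) < Real.exp 1 := Real.exp_pos 1
  set m : ℕ := k.natAbs with hm
  set C : ℝ := y + y⁻¹ + 1 with hC
  have hy' : 0 < y⁻¹ := inv_pos.mpr hy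
  have hC0 : 0 < C := by positivity
  have hpos : ∀ n : ℕ, 0 < y + (n : ℝ) := fun n => by positivity
  -- key polynomial bound for (y+n)^j with |j| = |k|
  have key : ∀ j : ℤ, j.natAbs = m → ∀ n : ℕ,
      (y + (n : ℝ)) ^ j ≤ (C * ((n : ℝ) + 1)) ^ m := by
    intro j hj n
    have hn0 : (0:ℝ) ≤ (n : ℝ) := Nat.cast_nonneg n
    have hb : y + (n:ℝ) ≤ C * ((n:ℝ) + 1) := by rw [hC]; nlinarith
    have hb' : y⁻¹ ≤ C * ((n:ℝ) + 1) := by rw [hC]; nlinarith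
    rcases Int.natAbs_eq j with h | h
    · rw [h, hj, zpow_natCast]
      exact pow_le_pow_left₀ (hpos n).le hb m
    · rw [h, hj, zpow_neg, zpow_natCast]
      have h1 : ((y + (n:ℝ)) ^ m)⁻¹ ≤ (y ^ m)⁻¹ := by
        apply inv_anti₀ (by positivity)
        exact pow_le_pow_left₀ hy.le (by linarith) m
      calc ((y + (n:ℝ)) ^ m)⁻¹ ≤ (y ^ m)⁻¹ := h1
        _ = (y⁻¹) ^ m := by rw [← inv_pow]
        _ ≤ (C * ((n:ℝ) + 1)) ^ m := pow_le_pow_left₀ hy'.le hb' m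
  -- absolute value of the general term
  have habs : ∀ (x : ℝ) (n : ℕ),
      |(y + (n:ℝ)) ^ ((n : ℤ) - k) * x ^ n / (Nat.factorial n : ℝ)|
        = ((y + (n:ℝ)) ^ (n:ℕ) / (y + (n:ℝ)) ^ k) * |x| ^ n / (Nat.factorial n : ℝ) := by
    intro x n
    have h1 : (0:ℝ) < (y + (n:ℝ)) ^ ((n : ℤ) - k) := zpow_pos (hpos n) _
    rw [abs_div, abs_mul, abs_pow, abs_of_pos h1,
      abs_of_pos (by positivity : (0:ℝ) < (Nat.factorial n : ℝ)),
      zpow_sub₀ (hpos n).ne', zpow_natCast]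
  constructor
  · -- summable case
    intro x hx
    set r : ℝ := Real.exp 1 * |x| with hr
    have hr0 : 0 ≤ r := by positivity
    have hr1 : r < 1 := by
      rw [hr]
      rw [lt_div_iff₀ he] at hx
      linarith [hx]
    have hbound : ∀ n : ℕ,
        ‖(y + (n:ℝ)) ^ ((n : ℤ) - k) * x ^ n / (Nat.factorial n : ℝ)‖
          ≤ (Real.exp y * C ^ m) * ((2:ℝ) ^ m * (n:ℝ) ^ m + 1) * r ^ n := by
      intro n
      rw [Real.norm_eq_abs, habs x n]
      have h1 : (y + (n:ℝ)) ^ (n:ℕ) / (Nat.factorial n : ℝ) ≤ Real.exp (y + n) :=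
        Real.pow_div_factorial_le_exp (y + (n:ℝ)) (hpos n).le n
      have h2 : ((y + (n:ℝ)) ^ k)⁻¹ ≤ (C * ((n:ℝ) + 1)) ^ m := by
        have := key (-k) (Int.natAbs_neg k) n
        rwa [zpow_neg] at this
      have h3 : ((n:ℝ) + 1) ^ m ≤ (2:ℝ) ^ m * (n:ℝ) ^ m + 1 := by
        rcases Nat.eq_zero_or_pos n with h | h
        · subst h; simp
        · have hn1 : (1:ℝ) ≤ (n:ℝ) := by exact_mod_cast h
          have : ((n:ℝ) + 1) ^ m ≤ ((2:ℝ) * n) ^ m :=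
            pow_le_pow_left₀ (by positivity) (by linarith) m
          rw [mul_pow] at this
          linarith
      have hzk : (0:ℝ) < (y + (n:ℝ)) ^ k := zpow_pos (hpos n) k
      calc (y + (n:ℝ)) ^ (n:ℕ) / (y + (n:ℝ)) ^ k * |x| ^ n / (Nat.factorial n : ℝ)
          = ((y + (n:ℝ)) ^ (n:ℕ) / (Nat.factorial n : ℝ) * |x| ^ n) * ((y + (n:ℝ)) ^ k)⁻¹ := by
            ring
        _ ≤ (Real.exp (y + n) * |x| ^ n) * ((C * ((n:ℝ) + 1)) ^ m) := by
            apply mul_le_mul _ h2 (by positivity) (by positivity)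
            exact mul_le_mul_of_nonneg_right h1 (by positivity)
        _ = (Real.exp y * C ^ m) * ((n:ℝ) + 1) ^ m * r ^ n := by
            rw [Real.exp_add, mul_pow, hr, mul_pow, ← Real.exp_one_pow]
            ring
        _ ≤ (Real.exp y * C ^ m) * ((2:ℝ) ^ m * (n:ℝ) ^ m + 1) * r ^ n := by
            apply mul_le_mul_of_nonneg_right _ (by positivity)
            exact mul_le_mul_of_nonneg_left h3 (by positivity)
    have hs : Summable (fun n : ℕ =>
        (Real.exp y * C ^ m) * ((2:ℝ) ^ m * (n:ℝ) ^ m + 1) * r ^ n) := by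
      have hr' : ‖r‖ < 1 := by rwa [Real.norm_eq_abs, abs_of_nonneg hr0]
      have h1 := (summable_pow_mul_geometric_of_norm_lt_one m hr').mul_left
        (Real.exp y * C ^ m * 2 ^ m)
      have h2 := (summable_geometric_of_lt_one hr0 hr1).mul_left (Real.exp y * C ^ m)
      exact (h1.add h2).congr fun n => by ring
    exact Summable.of_norm_bounded hs hbound
  · -- divergent case
    intro x hx hsum
    set q : ℝ := Real.exp 1 * |x| with hq
    have hq1 : 1 < q := by
      rw [hq]
      rw [div_lt_iff₀ he] at hx
      linarith [hx]
    have hq0 : 0 < q := by linarith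
    -- Stirling bound
    obtain ⟨B₀, hB₀⟩ := Stirling.tendsto_stirlingSeq_sqrt_pi.bddAbove_range
    set B : ℝ := max B₀ 1 with hB
    have hB1 : (1:ℝ) ≤ B := le_max_right _ _
    have hB0 : (0:ℝ) < B := lt_of_lt_of_le one_pos hB1
    have hfact : ∀ n : ℕ, 1 ≤ n →
        (Nat.factorial n : ℝ) ≤ B * Real.sqrt (2 * n) * ((n : ℝ) / Real.exp 1) ^ n := by
      intro n hn
      have hn1 : (1:ℝ) ≤ (n:ℝ) := by exact_mod_cast hn
      have hden : 0 < Real.sqrt (2 * n) * ((n : ℝ) / Real.exp 1) ^ n := by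
        apply mul_pos (Real.sqrt_pos.mpr (by positivity)) (pow_pos (by positivity) n)
      have h1 : Stirling.stirlingSeq n ≤ B :=
        le_trans (hB₀ (Set.mem_range_self n)) (le_max_left _ _)
      rw [Stirling.stirlingSeq, div_le_iff₀ hden] at h1
      calc (Nat.factorial n : ℝ) ≤ B * (Real.sqrt (2 * n) * ((n : ℝ) / Real.exp 1) ^ n) := h1
        _ = B * Real.sqrt (2 * n) * ((n : ℝ) / Real.exp 1) ^ n := by ring
    set D : ℝ := 2 * B * C ^ m with hD
    have hD0 : 0 < D := by positivity
    -- lower bound on terms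
    have hlow : ∀ n : ℕ, 1 ≤ n →
        q ^ n / (D * ((n:ℝ) + 1) ^ (m + 1))
          ≤ ‖(y + (n:ℝ)) ^ ((n : ℤ) - k) * x ^ n / (Nat.factorial n : ℝ)‖ := by
      intro n hn
      have hn1 : (1:ℝ) ≤ (n:ℝ) := by exact_mod_cast hn
      rw [Real.norm_eq_abs, habs x n]
      have hzk : (0:ℝ) < (y + (n:ℝ)) ^ k := zpow_pos (hpos n) k
      have hkey := key k rfl n
      have hsq : Real.sqrt (2 * n) ≤ 2 * ((n:ℝ) + 1) := by
        have h1 : Real.sqrt (2 * n) ≤ Real.sqrt ((2 * (n:ℝ)) ^ 2) :=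
          Real.sqrt_le_sqrt (by nlinarith)
        rw [Real.sqrt_sq (by positivity)] at h1
        linarith
      have hCn : (0:ℝ) < (C * ((n:ℝ) + 1)) ^ m := by positivity
      calc q ^ n / (D * ((n:ℝ) + 1) ^ (m + 1))
          ≤ q ^ n / (B * Real.sqrt (2 * n) * (C * ((n:ℝ) + 1)) ^ m) := by
            apply div_le_div_of_nonneg_left (by positivity) _ _
            · apply mul_pos (mul_pos hB0 (Real.sqrt_pos.mpr (by positivity))) hCn
            · rw [hD, mul_pow]
              calc B * Real.sqrt (2 * n) * (C ^ m * ((n:ℝ) + 1) ^ m)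
                  ≤ B * (2 * ((n:ℝ) + 1)) * (C ^ m * ((n:ℝ) + 1) ^ m) := by
                    apply mul_le_mul_of_nonneg_right _ (by positivity)
                    exact mul_le_mul_of_nonneg_left hsq hB0.le
                _ = 2 * B * C ^ m * (((n:ℝ) + 1) ^ m * ((n:ℝ) + 1)) := by ring
                _ = 2 * B * C ^ m * ((n:ℝ) + 1) ^ (m + 1) := by rw [pow_succ]
        _ = ((n:ℝ) ^ n / (C * ((n:ℝ) + 1)) ^ m) * |x| ^ n
              / (B * Real.sqrt (2 * n) * ((n : ℝ) / Real.exp 1) ^ n) := by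
            have hne : ((n:ℝ)) ≠ 0 := by linarith
            have hsqne : Real.sqrt (2 * n) ≠ 0 :=
              (Real.sqrt_pos.mpr (by positivity)).ne'
            rw [hq, div_pow, mul_pow]
            field_simp
        _ ≤ ((y + (n:ℝ)) ^ (n:ℕ) / (y + (n:ℝ)) ^ k) * |x| ^ n
              / (B * Real.sqrt (2 * n) * ((n : ℝ) / Real.exp 1) ^ n) := by
            have hden : 0 < B * Real.sqrt (2 * n) * ((n : ℝ) / Real.exp 1) ^ n :=
              mul_pos (mul_pos hB0 (Real.sqrt_pos.mpr (by positivity)))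
                (pow_pos (by positivity) n)
            have h5 : (n:ℝ) ^ n / (C * ((n:ℝ) + 1)) ^ m
                ≤ (y + (n:ℝ)) ^ (n:ℕ) / (y + (n:ℝ)) ^ k :=
              div_le_div₀ (by positivity)
                (pow_le_pow_left₀ (by positivity) (by linarith) n) hzk hkey
            gcongr ?_ * _ / _
        _ ≤ ((y + (n:ℝ)) ^ (n:ℕ) / (y + (n:ℝ)) ^ k) * |x| ^ n / (Nat.factorial n : ℝ) := by
            apply div_le_div_of_nonneg_left _ (by positivity) (hfact n hn)
            have : (0:ℝ) < (y + (n:ℝ)) ^ (n:ℕ) := pow_pos (hpos n) n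
            positivity
    -- the lower bound tends to infinity
    have htend : Tendsto (fun n : ℕ => q ^ n / (D * ((n:ℝ) + 1) ^ (m + 1))) atTop atTop := by
      have hqi : ‖q⁻¹‖ < 1 := by
        rw [Real.norm_eq_abs, abs_of_pos (inv_pos.mpr hq0)]
        rw [inv_lt_one_iff₀]; right; exact hq1
      have h0 : Tendsto (fun n : ℕ => D * ((n:ℝ) + 1) ^ (m + 1) * (q⁻¹) ^ n) atTop (𝓝 0) := by
        have hbase := (summable_pow_mul_geometric_of_norm_lt_one (m + 1) hqi).tendsto_atTop_zero
        have hshift := hbase.comp (tendsto_add_atTop_nat 1)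
        have := (hshift.const_mul (D * q))
        rw [mul_zero] at this
        apply this.congr
        intro n
        simp only [Function.comp_apply]
        push_cast
        have hqne : q ≠ 0 := hq0.ne'
        field_simp
        ring_nf
        rw [mul_inv_cancel₀ hqne, one_mul]
      have h0' : Tendsto (fun n : ℕ => D * ((n:ℝ) + 1) ^ (m + 1) * (q⁻¹) ^ n) atTop (𝓝[>] 0) := by
        apply tendsto_nhdsWithin_of_tendsto_nhds_of_eventually_within _ h0
        exact Eventually.of_forall fun n => Set.mem_Ioi.mpr (by positivity)
      have := h0'.inv_tendsto_nhdsGT_zero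
      apply this.congr
      intro n
      simp only [Pi.inv_apply]
      rw [mul_inv, inv_pow, inv_inv]
      ring
    -- contradiction
    have hzero := hsum.tendsto_atTop_zero.norm
    rw [norm_zero] at hzero
    have h1 : ∀ᶠ n : ℕ in atTop,
        ‖(y + (n:ℝ)) ^ ((n : ℤ) - k) * x ^ n / (Nat.factorial n : ℝ)‖ < 1 := by
      exact hzero.eventually (eventually_lt_nhds zero_lt_one)
    have h2 : ∀ᶠ n : ℕ in atTop, (1:ℝ) ≤ q ^ n / (D * ((n:ℝ) + 1) ^ (m + 1)) :=
      htend.eventually_ge_atTop 1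
    have h3 : ∀ᶠ n : ℕ in atTop, 1 ≤ n := eventually_ge_atTop 1
    obtain ⟨n, hn1, hn2, hn3⟩ := (h1.and (h2.and h3)).exists
    exact absurd (le_trans hn2 (hlow n hn3)) (not_le.mpr hn1)
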